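/- If G is an odd cycle of diamonds (a connected 3-regular graph on 4t vertices with t odd, in which every vertex lies in a diamond), then G has no color-blind distinguishing edge-coloring with any number of colors; that is, dal(G) = ∞. -/

import Mathlib

open Finset

/-- The color-blind partition of `v`: the multiset of (nonzero) counts of incident
edges of each color, i.e. the partition of `deg v` with trailing zeroes removed. -/
def cbp {V : Type*} [Fintype V] [DecidableEq V] (G : SimpleGraph V) [DecidableRel G.Adj]
    {k : ℕ} (c : Sym2 V → Fin k) (v : V) : Multiset ℕ :=
  (((Finset.univ : Finset (Fin k)).val.map fun i =>
    ((G.neighborFinset v).filter fun w => c s(v, w) = i).card).filter fun m => m ≠ 0)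

/-- `c` is a color-blind distinguishing edge-coloring of `G`. -/
def IsCBD {V : Type*} [Fintype V] [DecidableEq V] (G : SimpleGraph V) [DecidableRel G.Adj]
    {k : ℕ} (c : Sym2 V → Fin k) : Prop :=
  ∀ u v : V, G.Adj u v → cbp G c u ≠ cbp G c v

/-- Inside diamond `i` (vertices `(i,0)=x, (i,1)=y, (i,2)=z, (i,3)=w`) the diamond edges,
together with the connecting edge from `w` of diamond `i` to `x` of diamond `i+1 (mod t)`. -/
def diamondRel (t : ℕ) (p q : Fin t × Fin 4) : Prop :=
  (p.1 = q.1 ∧ (p.2.val, q.2.val) ∈ [(0,1),(0,2),(1,2),(1,3),(2,3)]) ∨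
  ((p.1.val + 1) % t = q.1.val ∧ p.2.val = 3 ∧ q.2.val = 0)

instance (t : ℕ) : DecidableRel (diamondRel t) := fun p q => by
  unfold diamondRel; infer_instance

/-- The cycle of `t` diamonds. For `t = 1` this is `K₄`. -/
def diamondCycle (t : ℕ) : SimpleGraph (Fin t × Fin 4) where
  Adj p q := p ≠ q ∧ (diamondRel t p q ∨ diamondRel t q p)
  symm := ⟨fun p q h => ⟨h.1.symm, h.2.symm⟩⟩
  loopless := ⟨fun p h => h.1 rfl⟩

instance (t : ℕ) : DecidableRel (diamondCycle t).Adj := fun p q =>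
  inferInstanceAs (Decidable (p ≠ q ∧ (diamondRel t p q ∨ diamondRel t q p)))

/-! ### Auxiliary material -/

/-- The color-blind partition of a degree-3 vertex whose incident edges have colors
`p`, `q`, `r`. -/
def tri {k : ℕ} (p q r : Fin k) : Multiset ℕ :=
  if p = q ∧ q = r then {3} else if p = q ∨ q = r ∨ p = r then {2,1} else {1,1,1}

lemma tri_cases {k : ℕ} (p q r : Fin k) :
    tri p q r = {3} ∨ tri p q r = {2,1} ∨ tri p q r = {1,1,1} := by
  unfold tri; split_ifs <;> simp

lemma tri_eq_three {k : ℕ} {p q r : Fin k} (h : tri p q r = {3}) : p = q ∧ q = r := by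
  by_contra hc
  unfold tri at h
  rw [if_neg hc] at h
  split_ifs at h <;> exact absurd h (by decide)

lemma filter_map_univ {k : ℕ} (F : Fin k → ℕ) (S : Finset (Fin k))
    (h : ∀ i, ¬ F i = 0 ↔ i ∈ S) :
    Multiset.filter (fun m => m ≠ 0) ((univ : Finset (Fin k)).val.map F) = S.val.map F := by
  rw [Multiset.filter_map]
  congr 1
  have h1 : Multiset.filter ((fun m => m ≠ 0) ∘ F) (univ : Finset (Fin k)).val
      = (univ.filter fun i => ¬ F i = 0).val := rfl
  rw [h1]
  congr 1
  ext i
  simp [h i]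

lemma tri_spec {k : ℕ} (p q r : Fin k) :
    Multiset.filter (fun m => m ≠ 0) ((univ : Finset (Fin k)).val.map
      (fun i => ((if p = i then 1 else 0) + (if q = i then 1 else 0)
        + (if r = i then 1 else 0) : ℕ))) = tri p q r := by
  set F : Fin k → ℕ := fun i => (if p = i then 1 else 0) + (if q = i then 1 else 0)
      + (if r = i then 1 else 0) with hF
  by_cases hpq : p = q <;> by_cases hqr : q = r <;> by_cases hpr : p = r
  · -- all equal
    subst hpq; subst hqr
    rw [filter_map_univ F {p} (by
      intro i
      simp only [hF, Finset.mem_singleton]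
      split_ifs with h <;> simp_all [eq_comm])]
    rw [show ({p} : Finset (Fin k)).val = {p} from rfl, Multiset.map_singleton]
    have h1 : F p = 3 := by simp only [hF]; split_ifs <;> simp_all
    rw [h1]
    unfold tri
    rw [if_pos ⟨rfl, rfl⟩]
  · exact absurd (hpq.trans hqr) hpr
  · exact absurd hpq (fun h => hqr (h.symm.trans hpr))
  · -- p = q ≠ r
    subst hpq
    rw [filter_map_univ F {p, r} (by
      intro i
      simp only [hF, Finset.mem_insert, Finset.mem_singleton]
      split_ifs <;> simp_all [eq_comm])]
    have hv : ({p, r} : Finset (Fin k)).val = p ::ₘ {r} :=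
      Finset.insert_val_of_notMem (by simp_all)
    have h1 : F p = 2 := by simp only [hF]; split_ifs <;> simp_all
    have h2 : F r = 1 := by simp only [hF]; split_ifs <;> simp_all
    rw [hv, Multiset.map_cons, Multiset.map_singleton, h1, h2]
    unfold tri
    rw [if_neg (by tauto), if_pos (by tauto)]
    decide
  · exact absurd (hpr.trans hqr.symm) hpq
  · -- q = r ≠ p
    subst hqr
    rw [filter_map_univ F {p, q} (by
      intro i
      simp only [hF, Finset.mem_insert, Finset.mem_singleton]
      split_ifs <;> simp_all [eq_comm])]
    have hv : ({p, q} : Finset (Fin k)).val = p ::ₘ {q} :=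
      Finset.insert_val_of_notMem (by simp_all)
    have h1 : F p = 1 := by simp only [hF]; split_ifs <;> simp_all
    have h2 : F q = 2 := by simp only [hF]; split_ifs <;> simp_all
    rw [hv, Multiset.map_cons, Multiset.map_singleton, h1, h2]
    unfold tri
    rw [if_neg (by tauto), if_pos (by tauto)]
    decide
  · -- p = r ≠ q
    subst hpr
    rw [filter_map_univ F {p, q} (by
      intro i
      simp only [hF, Finset.mem_insert, Finset.mem_singleton]
      split_ifs <;> simp_all [eq_comm])]
    have hv : ({p, q} : Finset (Fin k)).val = p ::ₘ {q} :=
      Finset.insert_val_of_notMem (by simp_all)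
    have h1 : F p = 2 := by simp only [hF]; split_ifs <;> simp_all
    have h2 : F q = 1 := by simp only [hF]; split_ifs <;> simp_all
    rw [hv, Multiset.map_cons, Multiset.map_singleton, h1, h2]
    unfold tri
    rw [if_neg (by tauto), if_pos (by tauto)]
    decide
  · -- all distinct
    rw [filter_map_univ F {p, q, r} (by
      intro i
      simp only [hF, Finset.mem_insert, Finset.mem_singleton]
      split_ifs <;> simp_all [eq_comm])]
    have hv : ({p, q, r} : Finset (Fin k)).val = p ::ₘ q ::ₘ {r} := by
      rw [show ({p, q, r} : Finset (Fin k)) = insert p {q, r} from rfl,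
        Finset.insert_val_of_notMem (by simp_all)]
      congr 1
      exact Finset.insert_val_of_notMem (by simp_all)
    have h1 : F p = 1 := by simp only [hF]; split_ifs <;> simp_all
    have h2 : F q = 1 := by simp only [hF]; split_ifs <;> simp_all
    have h3 : F r = 1 := by simp only [hF]; split_ifs <;> simp_all
    rw [hv, Multiset.map_cons, Multiset.map_cons, Multiset.map_singleton, h1, h2, h3]
    unfold tri
    rw [if_neg (by tauto), if_neg (by tauto)]
    decide

lemma cbp_eq_tri {V : Type*} [Fintype V] [DecidableEq V] (G : SimpleGraph V)
    [DecidableRel G.Adj] {k : ℕ} (c : Sym2 V → Fin k) (v n1 n2 n3 : V)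
    (hN : G.neighborFinset v = {n1, n2, n3})
    (h12 : n1 ≠ n2) (h13 : n1 ≠ n3) (h23 : n2 ≠ n3) :
    cbp G c v = tri (c s(v, n1)) (c s(v, n2)) (c s(v, n3)) := by
  have hf : (fun i => ((G.neighborFinset v).filter fun w => c s(v, w) = i).card)
      = fun i => ((if c s(v, n1) = i then 1 else 0) + (if c s(v, n2) = i then 1 else 0)
          + (if c s(v, n3) = i then 1 else 0) : ℕ) := by
    funext i
    rw [hN, Finset.card_filter,
      Finset.sum_insert (by simp [h12, h13]),
      Finset.sum_insert (by simp [h23]), Finset.sum_singleton]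
    ring
  unfold cbp
  rw [hf]
  exact tri_spec _ _ _

/-! ### mod arithmetic helpers -/

lemma mod_add_one (t a : ℕ) : (a % t + 1) % t = (a + 1) % t := by
  conv_rhs => rw [Nat.add_mod]
  rw [Nat.add_mod (a % t) 1 t, Nat.mod_mod_of_dvd a dvd_rfl]

def nxt {t : ℕ} (i : Fin t) : Fin t := ⟨(i.val + 1) % t, Nat.mod_lt _ i.pos⟩
def prv {t : ℕ} (i : Fin t) : Fin t := ⟨(i.val + t - 1) % t, Nat.mod_lt _ i.pos⟩

lemma prv_spec {t : ℕ} (i : Fin t) : ((prv i).val + 1) % t = i.val := by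
  show ((i.val + t - 1) % t + 1) % t = i.val
  rw [mod_add_one]
  have h1 : i.val + t - 1 + 1 = i.val + t := by have := i.pos; omega
  rw [h1, Nat.add_mod_right, Nat.mod_eq_of_lt i.isLt]

lemma prev_unique {t : ℕ} (i j : Fin t) (h : (j.val + 1) % t = i.val) : j = prv i := by
  apply Fin.ext
  show j.val = (i.val + t - 1) % t
  rcases Nat.lt_or_ge (j.val + 1) t with h' | h'
  · rw [Nat.mod_eq_of_lt h'] at h
    have h2 : i.val + t - 1 = j.val + t := by omega
    rw [h2, Nat.add_mod_right, Nat.mod_eq_of_lt j.isLt]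
  · have hj : j.val + 1 = t := by have := j.isLt; omega
    rw [hj, Nat.mod_self] at h
    have h2 : i.val + t - 1 = t - 1 := by omega
    rw [h2, Nat.mod_eq_of_lt (by omega)]
    omega

/-! ### Neighborhoods in the diamond cycle -/

lemma nbr1 {t : ℕ} (i : Fin t) :
    (diamondCycle t).neighborFinset (i, (1 : Fin 4)) = {(i,0), (i,2), (i,3)} := by
  ext ⟨j, m⟩
  simp only [SimpleGraph.mem_neighborFinset, Finset.mem_insert, Finset.mem_singleton]
  constructor
  · rintro ⟨hne, h | h⟩
    · rcases h with ⟨h1, h2⟩ | ⟨h1, h2, h3⟩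
      · simp only at h1
        subst h1
        fin_cases m <;> simp_all <;> omega
      · exact absurd h2 (by simp <;> decide)
    · rcases h with ⟨h1, h2⟩ | ⟨h1, h2, h3⟩
      · simp only at h1
        subst h1
        fin_cases m <;> simp_all <;> omega
      · exact absurd h3 (by simp <;> decide)
  · rintro (h | h | h) <;> simp only [Prod.mk.injEq] at h <;> obtain ⟨rfl, rfl⟩ := h
    · exact ⟨by simp [Prod.ext_iff], Or.inr (Or.inl ⟨rfl, by simp <;> decide⟩)⟩
    · exact ⟨by simp [Prod.ext_iff], Or.inl (Or.inl ⟨rfl, by simp <;> decide⟩)⟩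
    · exact ⟨by simp [Prod.ext_iff], Or.inl (Or.inl ⟨rfl, by simp <;> decide⟩)⟩

lemma nbr2 {t : ℕ} (i : Fin t) :
    (diamondCycle t).neighborFinset (i, (2 : Fin 4)) = {(i,0), (i,1), (i,3)} := by
  ext ⟨j, m⟩
  simp only [SimpleGraph.mem_neighborFinset, Finset.mem_insert, Finset.mem_singleton]
  constructor
  · rintro ⟨hne, h | h⟩
    · rcases h with ⟨h1, h2⟩ | ⟨h1, h2, h3⟩
      · simp only at h1
        subst h1
        fin_cases m <;> simp_all <;> omega
      · exact absurd h2 (by simp <;> decide)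
    · rcases h with ⟨h1, h2⟩ | ⟨h1, h2, h3⟩
      · simp only at h1
        subst h1
        fin_cases m <;> simp_all <;> omega
      · exact absurd h3 (by simp <;> decide)
  · rintro (h | h | h) <;> simp only [Prod.mk.injEq] at h <;> obtain ⟨rfl, rfl⟩ := h
    · exact ⟨by simp [Prod.ext_iff], Or.inr (Or.inl ⟨rfl, by simp <;> decide⟩)⟩
    · exact ⟨by simp [Prod.ext_iff], Or.inr (Or.inl ⟨rfl, by simp <;> decide⟩)⟩
    · exact ⟨by simp [Prod.ext_iff], Or.inl (Or.inl ⟨rfl, by simp <;> decide⟩)⟩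

lemma nbr0 {t : ℕ} (i : Fin t) :
    (diamondCycle t).neighborFinset (i, (0 : Fin 4)) = {(i,1), (i,2), (prv i, 3)} := by
  ext ⟨j, m⟩
  simp only [SimpleGraph.mem_neighborFinset, Finset.mem_insert, Finset.mem_singleton]
  constructor
  · rintro ⟨hne, h | h⟩
    · rcases h with ⟨h1, h2⟩ | ⟨h1, h2, h3⟩
      · simp only at h1
        subst h1
        fin_cases m <;> simp_all <;> omega
      · exact absurd h2 (by simp <;> decide)
    · rcases h with ⟨h1, h2⟩ | ⟨h1, h2, h3⟩
      · simp only at h1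
        subst h1
        fin_cases m <;> simp_all <;> omega
      · -- external edge: (j,m) with (j+1)%t = i, m = 3
        right; right
        have hm : m = 3 := by fin_cases m <;> simp_all
        have hj : j = prv i := prev_unique i j (by simpa using h1)
        rw [hm, hj]
  · rintro (h | h | h) <;> simp only [Prod.mk.injEq] at h <;> obtain ⟨rfl, rfl⟩ := h
    · exact ⟨by simp [Prod.ext_iff], Or.inl (Or.inl ⟨rfl, by simp <;> decide⟩)⟩
    · exact ⟨by simp [Prod.ext_iff], Or.inl (Or.inl ⟨rfl, by simp <;> decide⟩)⟩
    · exact ⟨by simp [Prod.ext_iff], Or.inr (Or.inr ⟨by simpa using prv_spec i, rfl, rfl⟩)⟩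

lemma nbr3 {t : ℕ} (i : Fin t) :
    (diamondCycle t).neighborFinset (i, (3 : Fin 4)) = {(i,1), (i,2), (nxt i, 0)} := by
  ext ⟨j, m⟩
  simp only [SimpleGraph.mem_neighborFinset, Finset.mem_insert, Finset.mem_singleton]
  constructor
  · rintro ⟨hne, h | h⟩
    · rcases h with ⟨h1, h2⟩ | ⟨h1, h2, h3⟩
      · simp only at h1
        subst h1
        fin_cases m <;> simp_all <;> omega
      · -- external edge: (i+1)%t = j, m = 0
        right; right
        have hm : m = 0 := by fin_cases m <;> simp_all
        have hj : j = nxt i := Fin.ext (by simpa [nxt] using h1.symm)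
        rw [hm, hj]
    · rcases h with ⟨h1, h2⟩ | ⟨h1, h2, h3⟩
      · simp only at h1
        subst h1
        fin_cases m <;> simp_all <;> omega
      · exact absurd h3 (by simp <;> decide)
  · rintro (h | h | h) <;> simp only [Prod.mk.injEq] at h <;> obtain ⟨rfl, rfl⟩ := h
    · exact ⟨by simp [Prod.ext_iff], Or.inr (Or.inl ⟨rfl, by simp <;> decide⟩)⟩
    · exact ⟨by simp [Prod.ext_iff], Or.inr (Or.inl ⟨rfl, by simp <;> decide⟩)⟩
    · exact ⟨by simp [Prod.ext_iff], Or.inl (Or.inr ⟨rfl, rfl, rfl⟩)⟩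

/-! ### Adjacency facts -/

lemma adj_of_nbr {t : ℕ} {u v : Fin t × Fin 4} {s : Finset (Fin t × Fin 4)}
    (hN : (diamondCycle t).neighborFinset u = s) (hv : v ∈ s) :
    (diamondCycle t).Adj u v := by
  rw [← SimpleGraph.mem_neighborFinset, hN]; exact hv

/-- A purely combinatorial pigeonhole lemma. -/
lemma three_distinct {α : Type*} {A B C T0 T1 T2 T3 : α}
    (m0 : T0 = A ∨ T0 = B ∨ T0 = C) (m1 : T1 = A ∨ T1 = B ∨ T1 = C)
    (m2 : T2 = A ∨ T2 = B ∨ T2 = C) (m3 : T3 = A ∨ T3 = B ∨ T3 = C)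
    (h01 : T0 ≠ T1) (h02 : T0 ≠ T2) (h12 : T1 ≠ T2) (h13 : T1 ≠ T3) (h23 : T2 ≠ T3) :
    T3 = T0 := by
  rcases m0 with rfl | rfl | rfl <;> rcases m1 with h1 | h1 | h1 <;>
    rcases m2 with h2 | h2 | h2 <;> rcases m3 with h3 | h3 | h3 <;> subst h1 <;> subst h2 <;>
    subst h3 <;> tauto

theorem odd_cycle_of_diamonds_dal_infinite (t : ℕ) (hodd : Odd t) :
    ∀ k : ℕ, ¬ ∃ c : Sym2 (Fin t × Fin 4) → Fin k, IsCBD (diamondCycle t) c := by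
  rintro k ⟨c, hC⟩
  have ht : 0 < t := hodd.pos
  set G := diamondCycle t with hG
  -- cbp computations
  have hx : ∀ i : Fin t, cbp G c (i, (0 : Fin 4))
      = tri (c s((i,0), (i,1))) (c s((i,0), (i,2))) (c s((i,0), (prv i, 3))) := fun i =>
    cbp_eq_tri G c _ _ _ _ (nbr0 i) (by simp) (by simp [Prod.ext_iff]) (by simp [Prod.ext_iff])
  have hy : ∀ i : Fin t, cbp G c (i, (1 : Fin 4))
      = tri (c s((i,1), (i,0))) (c s((i,1), (i,2))) (c s((i,1), (i,3))) := fun i =>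
    cbp_eq_tri G c _ _ _ _ (nbr1 i) (by simp) (by simp) (by simp)
  have hz : ∀ i : Fin t, cbp G c (i, (2 : Fin 4))
      = tri (c s((i,2), (i,0))) (c s((i,2), (i,1))) (c s((i,2), (i,3))) := fun i =>
    cbp_eq_tri G c _ _ _ _ (nbr2 i) (by simp) (by simp) (by simp)
  have hw : ∀ i : Fin t, cbp G c (i, (3 : Fin 4))
      = tri (c s((i,3), (i,1))) (c s((i,3), (i,2))) (c s((i,3), (nxt i, 0))) := fun i =>
    cbp_eq_tri G c _ _ _ _ (nbr3 i) (by simp) (by simp [Prod.ext_iff]) (by simp [Prod.ext_iff])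
  -- key per-diamond facts
  have key : ∀ i : Fin t, cbp G c (i, (0 : Fin 4)) = cbp G c (i, (3 : Fin 4))
      ∧ (cbp G c (i, (0 : Fin 4)) = {2,1} ∨ cbp G c (i, (0 : Fin 4)) = {1,1,1}) := by
    intro i
    have a01 : G.Adj (i, (0:Fin 4)) (i, (1:Fin 4)) := adj_of_nbr (nbr0 i) (by simp)
    have a02 : G.Adj (i, (0:Fin 4)) (i, (2:Fin 4)) := adj_of_nbr (nbr0 i) (by simp)
    have a12 : G.Adj (i, (1:Fin 4)) (i, (2:Fin 4)) := adj_of_nbr (nbr1 i) (by simp)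
    have a13 : G.Adj (i, (1:Fin 4)) (i, (3:Fin 4)) := adj_of_nbr (nbr1 i) (by simp)
    have a23 : G.Adj (i, (2:Fin 4)) (i, (3:Fin 4)) := adj_of_nbr (nbr2 i) (by simp)
    have h01 := hC _ _ a01
    have h02 := hC _ _ a02
    have h12 := hC _ _ a12
    have h13 := hC _ _ a13
    have h23 := hC _ _ a23
    have m0 : cbp G c (i, (0:Fin 4)) = {3} ∨ cbp G c (i, (0:Fin 4)) = ({2,1} : Multiset ℕ)
        ∨ cbp G c (i, (0:Fin 4)) = {1,1,1} := by rw [hx i]; exact tri_cases _ _ _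
    have m1 : cbp G c (i, (1:Fin 4)) = {3} ∨ cbp G c (i, (1:Fin 4)) = ({2,1} : Multiset ℕ)
        ∨ cbp G c (i, (1:Fin 4)) = {1,1,1} := by rw [hy i]; exact tri_cases _ _ _
    have m2 : cbp G c (i, (2:Fin 4)) = {3} ∨ cbp G c (i, (2:Fin 4)) = ({2,1} : Multiset ℕ)
        ∨ cbp G c (i, (2:Fin 4)) = {1,1,1} := by rw [hz i]; exact tri_cases _ _ _
    have m3 : cbp G c (i, (3:Fin 4)) = {3} ∨ cbp G c (i, (3:Fin 4)) = ({2,1} : Multiset ℕ)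
        ∨ cbp G c (i, (3:Fin 4)) = {1,1,1} := by rw [hw i]; exact tri_cases _ _ _
    have hxw : cbp G c (i, (0 : Fin 4)) = cbp G c (i, (3 : Fin 4)) :=
      (three_distinct m0 m1 m2 m3 h01 h02 h12 h13 h23).symm
    refine ⟨hxw, ?_⟩
    rcases m0 with h3 | h | h
    · exfalso
      have hx3 : tri (c s((i,0), (i,1))) (c s((i,0), (i,2))) (c s((i,0), (prv i, 3)))
          = {3} := by rw [← hx i]; exact h3
      have hw3 : tri (c s((i,3), (i,1))) (c s((i,3), (i,2))) (c s((i,3), (nxt i, 0)))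
          = {3} := by rw [← hw i, ← hxw]; exact h3
      obtain ⟨hab, _⟩ := tri_eq_three hx3
      obtain ⟨hef, _⟩ := tri_eq_three hw3
      apply h12
      rw [hy i, hz i]
      have e1 : c s((i,(1:Fin 4)), (i,(0:Fin 4))) = c s((i,(2:Fin 4)), (i,(0:Fin 4))) := by
        rw [Sym2.eq_swap]
        conv_rhs => rw [Sym2.eq_swap]
        exact hab
      have e2 : c s((i,(1:Fin 4)), (i,(3:Fin 4))) = c s((i,(2:Fin 4)), (i,(3:Fin 4))) := by
        conv_lhs => rw [Sym2.eq_swap]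
        conv_rhs => rw [Sym2.eq_swap]
        exact hef
      have e3 : c s((i,(1:Fin 4)), (i,(2:Fin 4))) = c s((i,(2:Fin 4)), (i,(1:Fin 4))) := by
        rw [Sym2.eq_swap]
      rw [e1, e2, e3]
    · exact Or.inl h
    · exact Or.inr h
  -- the step: consecutive cbp's at the x-vertices differ
  have hstep : ∀ i : Fin t,
      cbp G c (nxt i, (0 : Fin 4)) ≠ cbp G c (i, (0 : Fin 4)) := by
    intro i
    have a : G.Adj (i, (3:Fin 4)) (nxt i, (0:Fin 4)) := adj_of_nbr (nbr3 i) (by simp)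
    have h := hC _ _ a
    intro hcontra
    exact h (((key i).1).symm.trans hcontra.symm)
  -- parity argument along the cycle
  set Q : ℕ → Multiset ℕ :=
    fun n => cbp G c ((⟨n % t, Nat.mod_lt _ ht⟩ : Fin t), (0 : Fin 4)) with hQ
  have hnx : ∀ n : ℕ,
      nxt (⟨n % t, Nat.mod_lt _ ht⟩ : Fin t) = ⟨(n+1) % t, Nat.mod_lt _ ht⟩ :=
    fun n => Fin.ext (mod_add_one t n)
  have hQstep : ∀ n : ℕ, Q (n+1) ≠ Q n := by
    intro n
    have h := hstep (⟨n % t, Nat.mod_lt _ ht⟩ : Fin t)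
    rw [hnx n] at h
    exact h
  have hQmem : ∀ n : ℕ, Q n = {2,1} ∨ Q n = {1,1,1} := fun n => (key _).2
  have halt : ∀ n : ℕ, (Q n = Q 0 ↔ Even n) := by
    intro n
    induction n with
    | zero => simp
    | succ n ih =>
      rw [Nat.even_add_one, ← ih]
      have h1 := hQstep n
      rcases hQmem n with h2 | h2 <;> rcases hQmem (n+1) with h3 | h3 <;>
        rcases hQmem 0 with h4 | h4 <;> rw [h2] at h1 <;> rw [h3] at h1 <;>
        first
          | exact absurd rfl h1
          | (rw [h2, h3, h4]; decide)
  have hQt : Q t = Q 0 := by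
    have he : (⟨t % t, Nat.mod_lt _ ht⟩ : Fin t) = ⟨0 % t, Nat.mod_lt _ ht⟩ := by
      apply Fin.ext
      simp
    simp only [hQ]
    rw [he]
  have := (halt t).mp hQt
  exact (Nat.not_even_iff_odd.mpr hodd) this
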